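/- Let a, b, c, t₀ ∈ ℝ and h : ℝ → ℝ continuous. Let ũ be the normalized solution of ũ'(t) + a ũ(−t) + b ũ(t) = 0, ũ(0) = 1. If ũ(t₀) = 0 and w is a solution of w'(t) + a w(−t) + b w(t) = h(t) with w(t₀) = c, then for every λ ∈ ℝ, w + λũ is also a solution of the same initial value problem; in particular the problem does not have a unique solution. -/

import Mathlib

/-- The normalized solution of `u'(t) + a u(-t) + b u(t) = 0`, `u(0) = 1`,
given by explicit trigonometric, hyperbolic or linear formulas depending
on the sign of `a² - b²`. -/
noncomputable def utilde (a b : ℝ) : ℝ → ℝ := fun t =>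
  if a^2 > b^2 then
    Real.cos (Real.sqrt (a^2 - b^2) * t) -
      ((a + b) / Real.sqrt (a^2 - b^2)) * Real.sin (Real.sqrt (a^2 - b^2) * t)
  else if a^2 < b^2 then
    Real.cosh (Real.sqrt (b^2 - a^2) * t) -
      ((a + b) / Real.sqrt (b^2 - a^2)) * Real.sinh (Real.sqrt (b^2 - a^2) * t)
  else if a = b then 1 - 2 * a * t
  else 1

/-- The normalized solution of `v'(t) - a v(-t) + b v(t) = 0`, `v(0) = 1`. -/
noncomputable def vtilde (a b : ℝ) : ℝ → ℝ := utilde (-a) b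

/-- Even part of a function. -/
noncomputable def evenPart (f : ℝ → ℝ) : ℝ → ℝ := fun t => (f t + f (-t)) / 2

/-- Odd part of a function. -/
noncomputable def oddPart (f : ℝ → ℝ) : ℝ → ℝ := fun t => (f t - f (-t)) / 2

lemma utilde_hasDerivAt (a b t : ℝ) :
    HasDerivAt (utilde a b) (-(a * utilde a b (-t)) - b * utilde a b t) t := by
  unfold utilde
  by_cases h1 : a^2 > b^2
  · simp only [h1, if_pos]
    set ω := Real.sqrt (a^2 - b^2) with hωdef
    have hωpos : 0 < ω := Real.sqrt_pos.mpr (by linarith)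
    have hω2 : ω * ω = a^2 - b^2 := Real.mul_self_sqrt (by linarith)
    have hd : HasDerivAt (fun t : ℝ => ω * t) ω t := by
      simpa using (hasDerivAt_id t).const_mul ω
    have := hd.cos.sub (hd.sin.const_mul ((a + b) / ω))
    refine this.congr_deriv ?_
    have hne : ω ≠ 0 := ne_of_gt hωpos
    simp only [mul_neg, Real.cos_neg, Real.sin_neg]
    field_simp
    linear_combination (-Real.sin (ω*t)) * hω2
  · by_cases h2 : a^2 < b^2
    · simp only [h1, h2, if_neg, if_pos, not_false_iff]
      set μ := Real.sqrt (b^2 - a^2) with hμdef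
      have hμpos : 0 < μ := Real.sqrt_pos.mpr (by linarith)
      have hμ2 : μ * μ = b^2 - a^2 := Real.mul_self_sqrt (by linarith)
      have hd : HasDerivAt (fun t : ℝ => μ * t) μ t := by
        simpa using (hasDerivAt_id t).const_mul μ
      have := hd.cosh.sub (hd.sinh.const_mul ((a + b) / μ))
      refine this.congr_deriv ?_
      have hne : μ ≠ 0 := ne_of_gt hμpos
      simp only [mul_neg, Real.cosh_neg, Real.sinh_neg]
      field_simp
      linear_combination (Real.sinh (μ*t)) * hμ2
    · by_cases h3 : a = b
      · subst h3
        simp only [gt_iff_lt, lt_irrefl, if_false, if_pos rfl]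
        have hd : HasDerivAt (fun t : ℝ => 1 - 2 * a * t) (-(a * (1 - 2 * a * (-t))) - a * (1 - 2 * a * t)) t := by
          have := (((hasDerivAt_id t).const_mul (2*a)).const_sub 1)
          exact this.congr_deriv (by ring)
        exact hd
      · have hab : a + b = 0 := by
          have : a^2 = b^2 := le_antisymm (not_lt.mp h1) (not_lt.mp h2)
          have h4 : (a - b) * (a + b) = 0 := by nlinarith
          rcases mul_eq_zero.mp h4 with h5 | h5
          · exact absurd (by linarith) h3
          · exact h5
        simp only [h1, h2, h3, if_neg, not_false_iff]
        have hd : HasDerivAt (fun _ : ℝ => (1:ℝ)) 0 t := hasDerivAt_const t 1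
        convert hd using 1
        linarith

lemma utilde_diff (a b : ℝ) : Differentiable ℝ (utilde a b) :=
  fun t => (utilde_hasDerivAt a b t).differentiableAt

lemma utilde_zero (a b : ℝ) : utilde a b 0 = 1 := by
  unfold utilde; split_ifs <;> simp

theorem nonuniqueness_when_utilde_vanishes (a b c t₀ : ℝ) (h : ℝ → ℝ)
    (hh : Continuous h) (h₀ : utilde a b t₀ = 0)
    (w : ℝ → ℝ) (hw : Differentiable ℝ w)
    (hweq : ∀ t : ℝ, deriv w t + a * w (-t) + b * w t = h t)
    (hwc : w t₀ = c) :
    (∀ l : ℝ,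
      (∀ t : ℝ,
        deriv (fun t => w t + l * utilde a b t) t +
          a * (w (-t) + l * utilde a b (-t)) + b * (w t + l * utilde a b t) = h t) ∧
      w t₀ + l * utilde a b t₀ = c) ∧
    ∃ w₂ : ℝ → ℝ, w₂ ≠ w ∧ Differentiable ℝ w₂ ∧
      (∀ t : ℝ, deriv w₂ t + a * w₂ (-t) + b * w₂ t = h t) ∧ w₂ t₀ = c := by
  have key : ∀ l : ℝ,
      (∀ t : ℝ,
        deriv (fun t => w t + l * utilde a b t) t +
          a * (w (-t) + l * utilde a b (-t)) + b * (w t + l * utilde a b t) = h t) ∧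
      w t₀ + l * utilde a b t₀ = c := by
    intro l
    constructor
    · intro t
      have hu := utilde_hasDerivAt a b t
      have hderiv : deriv (fun t => w t + l * utilde a b t) t =
          deriv w t + l * (-(a * utilde a b (-t)) - b * utilde a b t) :=
        ((hw t).hasDerivAt.add (hu.const_mul l)).deriv
      rw [hderiv]
      linear_combination hweq t
    · rw [h₀, hwc]; ring
  refine ⟨key, ⟨fun t => w t + 1 * utilde a b t, ?_, ?_, (key 1).1, (key 1).2⟩⟩
  · intro hcontra
    have := congrFun hcontra 0
    simp [utilde_zero] at this
  · exact hw.add ((utilde_diff a b).const_mul 1)
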